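/- Fix ε > 0 and let p = (1+ε)/n. Then with high probability (probability tending to 1 as n → ∞), the random graph G(n,p) contains at most n^{3/4} cycles of length at most (log n)/(2ε), where cycles are counted as cycle subgraphs. (Logarithms are natural.) -/

import Mathlib

-- shared ER preamble for stmts 8, 9, 13, 14

open MeasureTheory Filter

/-- Graph built from edge indicator flags on non-diagonal unordered pairs. -/
def graphOfFlags {n : ℕ} (χ : {e : Sym2 (Fin n) // ¬ e.IsDiag} → Bool) : SimpleGraph (Fin n) where
  Adj i j := i ≠ j ∧ ∀ h : ¬ (s(i, j) : Sym2 (Fin n)).IsDiag, χ ⟨s(i, j), h⟩ = true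
  symm := by
    refine ⟨?_⟩
    intro i j ⟨hne, h⟩
    refine ⟨hne.symm, fun hd => ?_⟩
    have he : (s(j, i) : Sym2 (Fin n)) = s(i, j) := Sym2.eq_swap
    rw [show (⟨s(j, i), hd⟩ : {e : Sym2 (Fin n) // ¬ e.IsDiag}) =
        ⟨s(i, j), he ▸ hd⟩ from Subtype.ext he]
    exact h _
  loopless := ⟨fun i h => h.1 rfl⟩

noncomputable instance (n : ℕ) : MeasurableSpace (SimpleGraph (Fin n)) := ⊤

/-- The Erdős–Rényi random graph measure on `SimpleGraph (Fin n)`. -/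
noncomputable def erdosRenyi (n : ℕ) (p : ℝ) : Measure (SimpleGraph (Fin n)) :=
  Measure.map graphOfFlags
    (Measure.pi fun _ : {e : Sym2 (Fin n) // ¬ e.IsDiag} =>
      (PMF.bernoulli (min (Real.toNNReal p) 1) (min_le_right _ _)).toMeasure)

open scoped ENNReal

variable {V : Type*} {G : SimpleGraph V}

/-- consecutive-pair edges of a list -/
def zipPairs (m : List V) : List (Sym2 V) := (m.zip m.tail).map fun p => s(p.1, p.2)

lemma walk_edges_eq_zipPairs : ∀ {u v : V} (w : G.Walk u v), w.edges = zipPairs w.support := by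
  intro u v w
  induction w with
  | nil => simp [zipPairs]
  | cons h q ih =>
    rename_i a b c
    rw [SimpleGraph.Walk.edges_cons, SimpleGraph.Walk.support_cons, ih]
    rw [q.support_eq_cons]
    generalize q.support.tail = t
    simp [zipPairs]

lemma walk_eq_of_support_eq : ∀ {u v : V} (w w' : G.Walk u v),
    w.support = w'.support → w = w' := by
  intro u v w
  induction w with
  | nil =>
    intro w' h
    cases w' with
    | nil => rfl
    | cons h' q' =>
      have := congrArg List.length h
      simp [SimpleGraph.Walk.support_cons] at this
  | cons h q ih =>
    rename_i x y z
    intro w' hsup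
    cases w' with
    | nil =>
      have := congrArg List.length hsup
      simp [SimpleGraph.Walk.support_cons] at this
    | cons h' q' =>
      rename_i b'
      simp only [SimpleGraph.Walk.support_cons, List.cons.injEq] at hsup
      have hb : y = b' := by
        have := hsup.2
        rw [q.support_eq_cons, q'.support_eq_cons] at this
        exact (List.cons.injEq _ _ _ _ ▸ this).1
      subst hb
      rw [ih q' hsup.2]

/-- cyclic edge list of a (tail of a closed walk's support) list -/
def edgeList : List V → List (Sym2 V)
  | [] => []
  | a :: t => zipPairs (((a :: t).getLast (List.cons_ne_nil a t)) :: a :: t)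

lemma edgeList_support_tail {v : V} (w : G.Walk v v) (hn : ¬ w.Nil) :
    edgeList w.support.tail = w.edges := by
  have hne : w.support.tail ≠ [] := by
    intro h
    have h2 := congrArg List.length h
    rw [List.length_tail, SimpleGraph.Walk.length_support] at h2
    simp only [Nat.add_sub_cancel, List.length_nil] at h2
    exact hn (SimpleGraph.Walk.nil_iff_length_eq.2 h2)
  obtain ⟨a, t, ht⟩ := List.exists_cons_of_ne_nil hne
  have hlast : (a :: t).getLast (List.cons_ne_nil a t) = v := by
    have := List.getLast_tail (l := w.support) (ht ▸ List.cons_ne_nil a t)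
    rw [w.getLast_support] at this
    rw [← this]
    congr 1
    exact ht.symm
  rw [walk_edges_eq_zipPairs w, ht, w.support_eq_cons, ht,
    show edgeList (a :: t) = zipPairs (((a :: t).getLast (List.cons_ne_nil a t)) :: a :: t) from rfl,
    hlast]

lemma tail_getLast_eq_start {v : V} (w : G.Walk v v) (hne : w.support.tail ≠ []) :
    w.support.tail.getLast hne = v := by
  rw [List.getLast_tail]
  exact w.getLast_support

lemma support_tail_ne_nil {v : V} (w : G.Walk v v) (hn : ¬ w.Nil) : w.support.tail ≠ [] := by
  intro h
  have h2 := congrArg List.length h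
  rw [List.length_tail, SimpleGraph.Walk.length_support] at h2
  simp only [Nat.add_sub_cancel, List.length_nil] at h2
  exact hn (SimpleGraph.Walk.nil_iff_length_eq.2 h2)

lemma toSubgraph_eq_of_support_tail_eq {v v' : V} (w : G.Walk v v) (w' : G.Walk v' v')
    (hn : ¬ w.Nil) (hn' : ¬ w'.Nil) (h : w.support.tail = w'.support.tail) :
    w.toSubgraph = w'.toSubgraph := by
  have hne := support_tail_ne_nil w hn
  have hne' := support_tail_ne_nil w' hn'
  have hv : v = v' := by
    rw [← tail_getLast_eq_start w hne, ← tail_getLast_eq_start w' hne']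
    congr 1
  subst hv
  have hsup : w.support = w'.support := by
    rw [w.support_eq_cons, w'.support_eq_cons, h]
  rw [walk_eq_of_support_eq w w' hsup]

instance finite_subgraph {V : Type*} [Finite V] (G : SimpleGraph V) : Finite G.Subgraph :=
  Finite.of_injective (fun H => (H.verts, H.Adj))
    (fun H₁ H₂ h => by
      obtain ⟨h1, h2⟩ := Prod.mk.injEq .. ▸ h
      exact SimpleGraph.Subgraph.ext h1 h2)

lemma cylinder_measure {n : ℕ} (q : NNReal) (hq : q ≤ 1) (S : Finset {e : Sym2 (Fin n) // ¬ e.IsDiag}) :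
    (Measure.pi fun _ : {e : Sym2 (Fin n) // ¬ e.IsDiag} => (PMF.bernoulli q hq).toMeasure)
      {χ : {e : Sym2 (Fin n) // ¬ e.IsDiag} → Bool | ∀ e ∈ S, χ e = true} = (q : ℝ≥0∞) ^ S.card := by
  classical
  have hset : {χ : {e : Sym2 (Fin n) // ¬ e.IsDiag} → Bool | ∀ e ∈ S, χ e = true}
      = Set.pi Set.univ (fun e => if e ∈ S then ({true} : Set Bool) else Set.univ) := by
    ext χ
    simp only [Set.mem_setOf_eq, Set.mem_pi, Set.mem_univ, forall_true_left]
    constructor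
    · intro h e
      by_cases he : e ∈ S <;> simp [he, h e]
    · intro h e he
      have := h e
      simp [he] at this
      exact this
  rw [hset, Measure.pi_pi]
  have hsing : (PMF.bernoulli q hq).toMeasure {true} = (q : ℝ≥0∞) := by
    rw [PMF.toMeasure_apply_singleton _ _ (measurableSet_singleton _)]
    rfl
  calc ∏ e : {e : Sym2 (Fin n) // ¬ e.IsDiag},
        (PMF.bernoulli q hq).toMeasure (if e ∈ S then ({true} : Set Bool) else Set.univ)
      = ∏ e : {e : Sym2 (Fin n) // ¬ e.IsDiag}, (if e ∈ S then (q : ℝ≥0∞) else 1) := by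
        refine Finset.prod_congr rfl fun e _ => ?_
        by_cases he : e ∈ S
        · rw [if_pos he, if_pos he, hsing]
        · rw [if_neg he, if_neg he, measure_univ]
    _ = (∏ _e ∈ S, (q : ℝ≥0∞)) := by rw [Finset.prod_ite_mem, Finset.univ_inter]
    _ = (q : ℝ≥0∞) ^ S.card := Finset.prod_const _

section Count
open Classical in
/-- edges of a list as a finset of non-diagonal pairs -/
noncomputable def Sfin {n : ℕ} (l : List (Fin n)) : Finset {e : Sym2 (Fin n) // ¬ e.IsDiag} :=
  Finset.univ.filter (fun e => e.1 ∈ edgeList l)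

/-- `l` is the support-tail of a cycle of length ≤ K in the complete graph -/
def CycP {n : ℕ} (K : ℕ) (l : List (Fin n)) : Prop :=
  ∃ (v : Fin n) (w : (⊤ : SimpleGraph (Fin n)).Walk v v),
    w.IsCycle ∧ w.length ≤ K ∧ w.support.tail = l

open Classical in
noncomputable def cycLists (n K : ℕ) : Finset (List (Fin n)) :=
  ((List.finite_length_le (Fin n) K).toFinset).filter (CycP K)

lemma card_Sfin {n K : ℕ} {l : List (Fin n)} (h : CycP K l) : (Sfin l).card = l.length := by
  classical
  obtain ⟨v, w, hc, hK, hl⟩ := h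
  have hnn : ¬ w.Nil := hc.not_nil
  have hedges : edgeList l = w.edges := by rw [← hl]; exact edgeList_support_tail w hnn
  have hcard : (Sfin l).card = w.edges.toFinset.card := by
    refine Finset.card_bij (fun e _ => e.1) ?_ ?_ ?_
    · intro e he
      simp only [Sfin, Finset.mem_filter, hedges] at he
      simpa using he.2
    · intro e₁ h₁ e₂ h₂ h
      exact Subtype.ext h
    · intro b hb
      rw [List.mem_toFinset] at hb
      have hbe : b ∈ (⊤ : SimpleGraph (Fin n)).edgeSet := w.edges_subset_edgeSet hb
      refine ⟨⟨b, ?_⟩, ?_, rfl⟩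
      · exact SimpleGraph.not_isDiag_of_mem_edgeSet _ hbe
      · simp [Sfin, hedges, hb]
  rw [hcard, List.toFinset_card_of_nodup hc.isTrail.edges_nodup,
    SimpleGraph.Walk.length_edges, ← hl, List.length_tail, SimpleGraph.Walk.length_support]
  simp

end Count

lemma flag_of_mem_edgeSet {n : ℕ} (χ : {e : Sym2 (Fin n) // ¬ e.IsDiag} → Bool)
    (e : {e : Sym2 (Fin n) // ¬ e.IsDiag}) (h : e.1 ∈ (graphOfFlags χ).edgeSet) :
    χ e = true := by
  obtain ⟨e', hd⟩ := e
  revert hd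
  refine Sym2.inductionOn e' (fun i j => ?_)
  intro hd h
  rw [show (⟨s(i, j), hd⟩ : {e : Sym2 (Fin n) // ¬ e.IsDiag}).1 = s(i, j) from rfl,
    SimpleGraph.mem_edgeSet] at h
  exact h.2 hd

open Classical in
lemma count_le {n : ℕ} (L : ℝ) (χ : {e : Sym2 (Fin n) // ¬ e.IsDiag} → Bool) :
    Nat.card {H : (graphOfFlags χ).Subgraph // ∃ (v : Fin n) (w : (graphOfFlags χ).Walk v v),
        w.IsCycle ∧ (w.length : ℝ) ≤ L ∧ w.toSubgraph = H} ≤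
      ((cycLists n ⌊L⌋₊).filter (fun l => ∀ e ∈ Sfin l, χ e = true)).card := by
  classical
  set G := graphOfFlags χ with hG
  set F := (cycLists n ⌊L⌋₊).filter (fun l => ∀ e ∈ Sfin l, χ e = true) with hF
  have hws : ∀ H : {H : G.Subgraph // ∃ (v : Fin n) (w : G.Walk v v),
      w.IsCycle ∧ (w.length : ℝ) ≤ L ∧ w.toSubgraph = H},
      ∃ p : Σ v : Fin n, G.Walk v v,
        p.2.IsCycle ∧ (p.2.length : ℝ) ≤ L ∧ p.2.toSubgraph = H.1 := by
    rintro ⟨H, v, w, h1, h2, h3⟩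
    exact ⟨⟨v, w⟩, h1, h2, h3⟩
  choose p hc hL ht using hws
  have hmem : ∀ H, (p H).2.support.tail ∈ F := by
    intro H
    set w := (p H).2 with hw
    have hnn : ¬ w.Nil := (hc H).not_nil
    have hlen : w.support.tail.length = w.length := by
      rw [List.length_tail, SimpleGraph.Walk.length_support]; simp
    rw [hF, Finset.mem_filter]
    refine ⟨?_, ?_⟩
    · rw [cycLists, Finset.mem_filter]
      constructor
      · rw [Set.Finite.mem_toFinset]
        simp only [Set.mem_setOf_eq, hlen]
        exact Nat.le_floor (hL H)
      · refine ⟨(p H).1, w.mapLe le_top, (hc H).mapLe le_top, ?_, ?_⟩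
        · simp only [SimpleGraph.Walk.mapLe, SimpleGraph.Walk.length_map]
          exact Nat.le_floor (hL H)
        · simp only [SimpleGraph.Walk.mapLe, SimpleGraph.Walk.support_map]
          rw [show ⇑(SimpleGraph.Hom.ofLE (le_top : G ≤ ⊤)) = id from rfl,
            List.map_id]
    · intro e he
      simp only [Sfin, Finset.mem_filter, Finset.mem_univ, true_and] at he
      rw [edgeList_support_tail w hnn] at he
      exact flag_of_mem_edgeSet χ e (w.edges_subset_edgeSet he)
  have hinj : Function.Injective
      (fun H : {H : G.Subgraph // ∃ (v : Fin n) (w : G.Walk v v),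
        w.IsCycle ∧ (w.length : ℝ) ≤ L ∧ w.toSubgraph = H} =>
        (⟨(p H).2.support.tail, hmem H⟩ : {l : List (Fin n) // l ∈ F})) := by
    intro H₁ H₂ h
    simp only [Subtype.mk.injEq] at h
    have := toSubgraph_eq_of_support_tail_eq (p H₁).2 (p H₂).2
      (hc H₁).not_nil (hc H₂).not_nil h
    rw [ht H₁, ht H₂] at this
    exact Subtype.ext this
  calc Nat.card _ ≤ Nat.card {l : List (Fin n) // l ∈ F} :=
        Nat.card_le_card_of_injective _ hinj
    _ = F.card := by rw [Nat.card_eq_fintype_card, Fintype.card_coe]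

open Classical in
lemma expectation_le {n K : ℕ} (hn : 0 < n) (q : NNReal) (hq : q ≤ 1) :
    ∫⁻ χ, (((cycLists n K).filter (fun l => ∀ e ∈ Sfin l, χ e = true)).card : ℝ≥0∞)
      ∂(Measure.pi fun _ : {e : Sym2 (Fin n) // ¬ e.IsDiag} => (PMF.bernoulli q hq).toMeasure)
    ≤ ∑ k ∈ Finset.range (K + 1), (n : ℝ≥0∞) ^ k * (q : ℝ≥0∞) ^ k := by
  set μ := Measure.pi fun _ : {e : Sym2 (Fin n) // ¬ e.IsDiag} =>
    (PMF.bernoulli q hq).toMeasure with hμ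
  have hcard : ∀ χ : {e : Sym2 (Fin n) // ¬ e.IsDiag} → Bool,
      ((((cycLists n K).filter (fun l => ∀ e ∈ Sfin l, χ e = true)).card : ℝ≥0∞))
      = ∑ l ∈ cycLists n K, (if ∀ e ∈ Sfin l, χ e = true then (1 : ℝ≥0∞) else 0) := by
    intro χ
    rw [Finset.card_filter]
    push_cast
    exact Finset.sum_congr rfl fun l _ => by split <;> simp
  calc ∫⁻ χ, _ ∂μ
      = ∑ l ∈ cycLists n K, ∫⁻ χ, (if ∀ e ∈ Sfin l, χ e = true then (1:ℝ≥0∞) else 0) ∂μ := by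
        simp_rw [hcard]
        exact lintegral_finset_sum _ (fun l _ => measurable_of_finite _)
    _ = ∑ l ∈ cycLists n K, μ {χ | ∀ e ∈ Sfin l, χ e = true} := by
        refine Finset.sum_congr rfl fun l _ => ?_
        have : (fun χ : {e : Sym2 (Fin n) // ¬ e.IsDiag} → Bool =>
            (if ∀ e ∈ Sfin l, χ e = true then (1:ℝ≥0∞) else 0))
            = Set.indicator {χ | ∀ e ∈ Sfin l, χ e = true} (fun _ => 1) := by
          ext χ
          rw [Set.indicator_apply]
          rfl
        rw [this]
        have := lintegral_indicator_one (μ := μ)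
          (Set.toFinite {χ : {e : Sym2 (Fin n) // ¬ e.IsDiag} → Bool |
            ∀ e ∈ Sfin l, χ e = true}).measurableSet
        exact this
    _ = ∑ l ∈ cycLists n K, (q : ℝ≥0∞) ^ l.length := by
        refine Finset.sum_congr rfl fun l hl => ?_
        rw [cylinder_measure q hq (Sfin l), card_Sfin]
        rw [cycLists, Finset.mem_filter] at hl
        exact hl.2
    _ = ∑ k ∈ Finset.range (K + 1), ∑ l ∈ (cycLists n K).filter (fun l => l.length = k),
          (q : ℝ≥0∞) ^ l.length := by
        rw [Finset.sum_fiberwise_of_maps_to]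
        intro l hl
        rw [Finset.mem_range, Nat.lt_succ_iff]
        rw [cycLists, Finset.mem_filter, Set.Finite.mem_toFinset] at hl
        exact hl.1
    _ ≤ ∑ k ∈ Finset.range (K + 1), (n : ℝ≥0∞) ^ k * (q : ℝ≥0∞) ^ k := by
        refine Finset.sum_le_sum fun k _ => ?_
        calc ∑ l ∈ (cycLists n K).filter (fun l => l.length = k), (q : ℝ≥0∞) ^ l.length
            = ∑ l ∈ (cycLists n K).filter (fun l => l.length = k), (q : ℝ≥0∞) ^ k := by
              refine Finset.sum_congr rfl fun l hl => ?_
              rw [Finset.mem_filter] at hl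
              rw [hl.2]
          _ = ((cycLists n K).filter (fun l => l.length = k)).card * (q : ℝ≥0∞) ^ k := by
              rw [Finset.sum_const, nsmul_eq_mul]
          _ ≤ (n : ℝ≥0∞) ^ k * (q : ℝ≥0∞) ^ k := by
              gcongr
              have hcard2 : ((cycLists n K).filter (fun l => l.length = k)).card ≤ n ^ k := by
                have := Finset.card_le_card_of_injOn
                  (f := fun l (i : Fin k) => l.getD i ⟨0, hn⟩)
                  (s := (cycLists n K).filter (fun l => l.length = k))
                  (t := (Finset.univ : Finset (Fin k → Fin n)))
                  (fun l _ => Finset.mem_univ _)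
                  ?_
                · simpa using this
                · intro l₁ h₁ l₂ h₂ hf
                  rw [Finset.coe_filter, Set.mem_setOf_eq] at h₁ h₂
                  refine List.ext_getElem (h₁.2.trans h₂.2.symm) fun i hi₁ hi₂ => ?_
                  have h3 := congrFun hf ⟨i, h₁.2 ▸ hi₁⟩
                  simp only [Fin.val_mk] at h3
                  rwa [List.getD_eq_getElem _ _ hi₁, List.getD_eq_getElem _ _ hi₂] at h3
              calc ((cycLists n K).filter (fun l => l.length = k)).card
                  ≤ ((n : ℕ) ^ k : ℝ≥0∞) := by exact_mod_cast Nat.cast_le.2 hcard2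
                _ = (n : ℝ≥0∞) ^ k := by push_cast; ring

lemma real_limit (ε : ℝ) (hε : 0 < ε) :
    Tendsto (fun n : ℕ =>
      (((⌊Real.log n / (2*ε)⌋₊ : ℝ) + 1) * (1+ε) ^ ⌊Real.log n / (2*ε)⌋₊) / (n:ℝ) ^ ((3:ℝ)/4))
      atTop (nhds 0) := by
  have hc : Tendsto (fun x : ℝ => (Real.log x / (2*ε) + 1) * x ^ (-((1:ℝ)/4))) atTop (nhds 0) := by
    have h1 : Tendsto (fun x : ℝ => Real.log x / x ^ ((1:ℝ)/4)) atTop (nhds 0) :=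
      (isLittleO_log_rpow_atTop (by norm_num)).tendsto_div_nhds_zero
    have h2 : Tendsto (fun x : ℝ => x ^ (-((1:ℝ)/4))) atTop (nhds 0) := by
      have := tendsto_rpow_neg_atTop (y := (1:ℝ)/4) (by norm_num)
      simpa using this
    have h3 : Tendsto (fun x : ℝ => (1/(2*ε)) * (Real.log x / x ^ ((1:ℝ)/4)) + x ^ (-((1:ℝ)/4)))
        atTop (nhds 0) := by
      have := (h1.const_mul (1/(2*ε))).add h2
      simpa using this
    refine h3.congr' ?_
    filter_upwards [eventually_gt_atTop (0:ℝ)] with x hx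
    rw [Real.rpow_neg hx.le]
    field_simp
  have hcn : Tendsto (fun n : ℕ => (Real.log n / (2*ε) + 1) * (n:ℝ) ^ (-((1:ℝ)/4)))
      atTop (nhds 0) := hc.comp tendsto_natCast_atTop_atTop
  refine tendsto_of_tendsto_of_tendsto_of_le_of_le' tendsto_const_nhds hcn ?_ ?_
  · filter_upwards [eventually_ge_atTop 1] with n hn
    positivity
  · filter_upwards [eventually_ge_atTop 1] with n hn
    have hn1 : (1:ℝ) ≤ (n:ℝ) := by exact_mod_cast hn
    have hnpos : (0:ℝ) < (n:ℝ) := by linarith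
    set L : ℝ := Real.log n / (2*ε) with hL
    set K : ℕ := ⌊L⌋₊ with hK
    have hL0 : 0 ≤ L := by
      apply div_nonneg (Real.log_nonneg hn1)
      linarith
    have hKL : (K : ℝ) ≤ L := Nat.floor_le hL0
    have hpow : (1+ε) ^ K ≤ (n:ℝ) ^ ((1:ℝ)/2) := by
      have e1 : (1+ε) ^ K ≤ Real.exp ε ^ K := by
        apply pow_le_pow_left₀ (by linarith) ?_ K
        linarith [Real.add_one_le_exp ε]
      have e2 : Real.exp ε ^ K = Real.exp (ε * K) := by
        rw [Real.exp_mul, Real.rpow_natCast]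
      have e3 : Real.exp (ε * K) ≤ Real.exp (Real.log n * (1/2)) := by
        rw [Real.exp_le_exp]
        have : ε * K ≤ ε * L := by
          apply mul_le_mul_of_nonneg_left hKL hε.le
        rw [hL] at this
        calc ε * (K:ℝ) ≤ ε * (Real.log n / (2*ε)) := this
          _ = Real.log n * (1/2) := by field_simp
      rw [Real.rpow_def_of_pos hnpos]
      calc (1+ε) ^ K ≤ Real.exp ε ^ K := e1
        _ = Real.exp (ε * K) := e2
        _ ≤ _ := e3
    have hd : (0:ℝ) < (n:ℝ) ^ ((3:ℝ)/4) := Real.rpow_pos_of_pos hnpos _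
    calc ((K : ℝ) + 1) * (1+ε) ^ K / (n:ℝ) ^ ((3:ℝ)/4)
        ≤ (L + 1) * (n:ℝ) ^ ((1:ℝ)/2) / (n:ℝ) ^ ((3:ℝ)/4) := by
          have hK1 : (K:ℝ) + 1 ≤ L + 1 := by linarith
          have h0 : (0:ℝ) ≤ (K:ℝ) + 1 := by positivity
          gcongr <;> first | positivity | linarith
    _ = (L + 1) * (n:ℝ) ^ (-((1:ℝ)/4)) := by
          rw [mul_div_assoc, ← Real.rpow_sub hnpos]
          norm_num

lemma measure_bound (ε : ℝ) (hε : 0 < ε) (n : ℕ) (hn : 1 ≤ n) :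
    1 - ENNReal.ofReal
        ((((⌊Real.log n / (2*ε)⌋₊ : ℝ) + 1) * (1+ε) ^ ⌊Real.log n / (2*ε)⌋₊) / (n:ℝ) ^ ((3:ℝ)/4))
    ≤ erdosRenyi n ((1 + ε) / n)
        {G : SimpleGraph (Fin n) |
          (Nat.card {H : G.Subgraph //
              ∃ (v : Fin n) (w : G.Walk v v), w.IsCycle ∧
                (w.length : ℝ) ≤ Real.log n / (2 * ε) ∧ w.toSubgraph = H} : ℝ) ≤
            (n : ℝ) ^ ((3 : ℝ) / 4)} := by
  classical
  set L : ℝ := Real.log n / (2 * ε) with hLdef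
  set K : ℕ := ⌊L⌋₊ with hKdef
  set p : ℝ := (1 + ε) / n with hpdef
  set q : NNReal := min (Real.toNNReal p) 1 with hqdef
  have hq : q ≤ 1 := min_le_right _ _
  set μ := Measure.pi fun _ : {e : Sym2 (Fin n) // ¬ e.IsDiag} =>
    (PMF.bernoulli q hq).toMeasure with hμdef
  have hmeas : Measurable (graphOfFlags (n := n)) := measurable_of_finite _
  have hprob : IsProbabilityMeasure μ := by infer_instance
  set S : Set (SimpleGraph (Fin n)) :=
    {G : SimpleGraph (Fin n) |
      (Nat.card {H : G.Subgraph //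
          ∃ (v : Fin n) (w : G.Walk v v), w.IsCycle ∧
            (w.length : ℝ) ≤ L ∧ w.toSubgraph = H} : ℝ) ≤ (n : ℝ) ^ ((3 : ℝ) / 4)} with hSdef
  have hmap : erdosRenyi n p S = μ (graphOfFlags ⁻¹' S) := by
    rw [erdosRenyi, Measure.map_apply hmeas MeasurableSpace.measurableSet_top]
  have hnR : (1:ℝ) ≤ (n:ℝ) := by exact_mod_cast hn
  have hnpos : (0:ℝ) < (n:ℝ) := by linarith
  have hrpos : (0:ℝ) < (n:ℝ) ^ ((3:ℝ)/4) := Real.rpow_pos_of_pos hnpos _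
  -- Markov bound for the complement
  have hcompl : μ (graphOfFlags ⁻¹' S)ᶜ ≤
      (∑ k ∈ Finset.range (K + 1), (n : ℝ≥0∞) ^ k * (q : ℝ≥0∞) ^ k) /
        ENNReal.ofReal ((n:ℝ) ^ ((3:ℝ)/4)) := by
    have hsub : (graphOfFlags ⁻¹' S)ᶜ ⊆
        {χ : {e : Sym2 (Fin n) // ¬ e.IsDiag} → Bool |
          ENNReal.ofReal ((n:ℝ) ^ ((3:ℝ)/4)) ≤
            ((Nat.card {H : (graphOfFlags χ).Subgraph //
              ∃ (v : Fin n) (w : (graphOfFlags χ).Walk v v), w.IsCycle ∧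
                (w.length : ℝ) ≤ L ∧ w.toSubgraph = H} : ℕ) : ℝ≥0∞)} := by
      intro χ hχ
      simp only [Set.mem_compl_iff, Set.mem_preimage, hSdef, Set.mem_setOf_eq, not_le] at hχ
      simp only [Set.mem_setOf_eq]
      rw [← ENNReal.ofReal_natCast]
      exact ENNReal.ofReal_le_ofReal hχ.le
    calc μ (graphOfFlags ⁻¹' S)ᶜ
        ≤ μ {χ : {e : Sym2 (Fin n) // ¬ e.IsDiag} → Bool |
            ENNReal.ofReal ((n:ℝ) ^ ((3:ℝ)/4)) ≤
              ((Nat.card {H : (graphOfFlags χ).Subgraph //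
                ∃ (v : Fin n) (w : (graphOfFlags χ).Walk v v), w.IsCycle ∧
                  (w.length : ℝ) ≤ L ∧ w.toSubgraph = H} : ℕ) : ℝ≥0∞)} := measure_mono hsub
      _ ≤ (∫⁻ χ, ((Nat.card {H : (graphOfFlags χ).Subgraph //
                ∃ (v : Fin n) (w : (graphOfFlags χ).Walk v v), w.IsCycle ∧
                  (w.length : ℝ) ≤ L ∧ w.toSubgraph = H} : ℕ) : ℝ≥0∞) ∂μ) /
            ENNReal.ofReal ((n:ℝ) ^ ((3:ℝ)/4)) := by
          apply meas_ge_le_lintegral_div (measurable_of_finite _).aemeasurable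
          · exact (ENNReal.ofReal_pos.2 hrpos).ne'
          · exact ENNReal.ofReal_ne_top
      _ ≤ (∑ k ∈ Finset.range (K + 1), (n : ℝ≥0∞) ^ k * (q : ℝ≥0∞) ^ k) /
            ENNReal.ofReal ((n:ℝ) ^ ((3:ℝ)/4)) := by
          apply ENNReal.div_le_div_right
          calc ∫⁻ χ, ((Nat.card _ : ℕ) : ℝ≥0∞) ∂μ
              ≤ ∫⁻ χ, (((cycLists n K).filter
                  (fun l => ∀ e ∈ Sfin l, χ e = true)).card : ℝ≥0∞) ∂μ := by
                apply lintegral_mono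
                intro χ
                exact_mod_cast Nat.cast_le.2 (count_le L χ)
            _ ≤ _ := expectation_le hn q hq
  -- bound the sum
  have h1e : (1:ℝ≥0∞) ≤ ENNReal.ofReal (1+ε) := by
    rw [ENNReal.one_le_ofReal]; linarith
  have hbase : (n : ℝ≥0∞) * (q : ℝ≥0∞) ≤ ENNReal.ofReal (1+ε) := by
    calc (n : ℝ≥0∞) * (q : ℝ≥0∞) ≤ (n : ℝ≥0∞) * ENNReal.ofReal p := by
          exact mul_le_mul_right (ENNReal.coe_le_coe.2 (min_le_left _ _)) _
      _ = ENNReal.ofReal ((n:ℝ) * p) := by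
          rw [ENNReal.ofReal_mul (by positivity), ENNReal.ofReal_natCast]
      _ = ENNReal.ofReal (1+ε) := by
          congr 1
          rw [hpdef]
          field_simp
  have hsum : (∑ k ∈ Finset.range (K + 1), (n : ℝ≥0∞) ^ k * (q : ℝ≥0∞) ^ k) ≤
      (K + 1 : ℕ) * ENNReal.ofReal (1+ε) ^ K := by
    calc (∑ k ∈ Finset.range (K + 1), (n : ℝ≥0∞) ^ k * (q : ℝ≥0∞) ^ k)
        ≤ ∑ _k ∈ Finset.range (K + 1), ENNReal.ofReal (1+ε) ^ K := by
          refine Finset.sum_le_sum fun k hk => ?_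
          rw [Finset.mem_range, Nat.lt_succ_iff] at hk
          calc (n : ℝ≥0∞) ^ k * (q : ℝ≥0∞) ^ k = ((n : ℝ≥0∞) * (q : ℝ≥0∞)) ^ k := (mul_pow _ _ _).symm
            _ ≤ ENNReal.ofReal (1+ε) ^ k := pow_le_pow_left' hbase k
            _ ≤ ENNReal.ofReal (1+ε) ^ K := pow_le_pow_right' h1e hk
      _ = (K + 1 : ℕ) * ENNReal.ofReal (1+ε) ^ K := by
          rw [Finset.sum_const, Finset.card_range, nsmul_eq_mul]
  -- identify with ofReal of the real bound
  have hofreal : ((K + 1 : ℕ) : ℝ≥0∞) * ENNReal.ofReal (1+ε) ^ K /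
      ENNReal.ofReal ((n:ℝ) ^ ((3:ℝ)/4)) =
      ENNReal.ofReal ((((K : ℝ) + 1) * (1+ε) ^ K) / (n:ℝ) ^ ((3:ℝ)/4)) := by
    rw [ENNReal.ofReal_div_of_pos hrpos, ENNReal.ofReal_mul (by positivity),
      ENNReal.ofReal_pow (by linarith)]
    congr 2
    rw [← ENNReal.ofReal_natCast (K+1)]
    congr 1
    push_cast
    ring
  have hcompl2 : μ (graphOfFlags ⁻¹' S)ᶜ ≤
      ENNReal.ofReal ((((K : ℝ) + 1) * (1+ε) ^ K) / (n:ℝ) ^ ((3:ℝ)/4)) := by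
    rw [← hofreal]
    exact hcompl.trans (ENNReal.div_le_div_right hsum _)
  -- conclude
  have hS : μ (graphOfFlags ⁻¹' S) = 1 - μ (graphOfFlags ⁻¹' S)ᶜ := by
    have := prob_compl_eq_one_sub (μ := μ) (s := (graphOfFlags ⁻¹' S)ᶜ)
      (Set.toFinite _).measurableSet
    rwa [compl_compl] at this
  calc 1 - ENNReal.ofReal ((((K : ℝ) + 1) * (1+ε) ^ K) / (n:ℝ) ^ ((3:ℝ)/4))
      ≤ 1 - μ (graphOfFlags ⁻¹' S)ᶜ := tsub_le_tsub_left hcompl2 1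
    _ = μ (graphOfFlags ⁻¹' S) := hS.symm
    _ = erdosRenyi n p S := hmap.symm

theorem stmt9 (ε : ℝ) (hε : 0 < ε) :
    Tendsto
      (fun n : ℕ =>
        erdosRenyi n ((1 + ε) / n)
          {G : SimpleGraph (Fin n) |
            (Nat.card {H : G.Subgraph //
                ∃ (v : Fin n) (w : G.Walk v v), w.IsCycle ∧
                  (w.length : ℝ) ≤ Real.log n / (2 * ε) ∧ w.toSubgraph = H} : ℝ) ≤
              (n : ℝ) ^ ((3 : ℝ) / 4)})
      atTop (nhds 1) := by
  have hub : ∀ n : ℕ,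
      erdosRenyi n ((1 + ε) / n)
        {G : SimpleGraph (Fin n) |
          (Nat.card {H : G.Subgraph //
              ∃ (v : Fin n) (w : G.Walk v v), w.IsCycle ∧
                (w.length : ℝ) ≤ Real.log n / (2 * ε) ∧ w.toSubgraph = H} : ℝ) ≤
            (n : ℝ) ^ ((3 : ℝ) / 4)} ≤ 1 := by
    intro n
    have : IsProbabilityMeasure (erdosRenyi n ((1 + ε) / n)) := by
      rw [erdosRenyi]
      exact Measure.isProbabilityMeasure_map (measurable_of_finite _).aemeasurable
    exact prob_le_one
  have h0 : Tendsto (fun n : ℕ => 1 - ENNReal.ofReal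
      ((((⌊Real.log n / (2*ε)⌋₊ : ℝ) + 1) * (1+ε) ^ ⌊Real.log n / (2*ε)⌋₊) /
        (n:ℝ) ^ ((3:ℝ)/4))) atTop (nhds 1) := by
    have h1 : Tendsto (fun n : ℕ => ENNReal.ofReal
        ((((⌊Real.log n / (2*ε)⌋₊ : ℝ) + 1) * (1+ε) ^ ⌊Real.log n / (2*ε)⌋₊) /
          (n:ℝ) ^ ((3:ℝ)/4))) atTop (nhds 0) := by
      have := ENNReal.tendsto_ofReal (real_limit ε hε)
      simpa using this
    have h2 := ENNReal.Tendsto.sub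
      (tendsto_const_nhds : Tendsto (fun _ : ℕ => (1:ℝ≥0∞)) atTop (nhds 1)) h1
      (Or.inl ENNReal.one_ne_top)
    simpa using h2
  refine tendsto_of_tendsto_of_tendsto_of_le_of_le' h0 tendsto_const_nhds ?_ ?_
  · filter_upwards [eventually_ge_atTop 1] with n hn
    exact measure_bound ε hε n hn
  · exact Eventually.of_forall hub
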